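/- For every q ∈ (1,2], the constant C_q = ((8 + q(q−1))/4) · (q−1)^{1/q − 1} satisfies C_q < 3. -/

import Mathlib

open Real

/-- Derivative of the comparison function `log x - (5x+1)(x-1)/(2x(x+2))`. -/
lemma Cq_aux_hasDerivAt (x : ℝ) (hx : 0 < x) :
    HasDerivAt (fun y => Real.log y - (5*y+1)*(y-1)/(2*y*(y+2)))
      (x⁻¹ - ((10*x-4)*(2*x*(x+2)) - (5*x+1)*(x-1)*(4*x+4))/(2*x*(x+2))^2) x := by
  have h1 := Real.hasDerivAt_log (ne_of_gt hx)
  have hnum : HasDerivAt (fun y : ℝ => (5*y+1)*(y-1)) ((10:ℝ)*x-4) x := by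
    have := (((hasDerivAt_id x).const_mul (5:ℝ)).add_const 1).mul
      ((hasDerivAt_id x).sub_const 1)
    convert this using 1
    rfl; rfl; funext y; simp [id_eq]; simp [id_eq]; ring
  have hden : HasDerivAt (fun y : ℝ => 2*y*(y+2)) ((4:ℝ)*x+4) x := by
    have := (((hasDerivAt_id x).const_mul (2:ℝ))).mul ((hasDerivAt_id x).add_const 2)
    convert this using 1
    rfl; rfl; funext y; simp [id_eq]; simp [id_eq]; ring
  have hne : 2*x*(x+2) ≠ 0 := by positivity
  exact h1.sub (hnum.div hden hne)

/-- Rational lower bound for the logarithm on `(0, 1]`. -/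
lemma Cq_log_lower_bound (t : ℝ) (ht : t ∈ Set.Ioc (0:ℝ) 1) :
    (5*t+1)*(t-1)/(2*t*(t+2)) ≤ Real.log t := by
  set f : ℝ → ℝ := fun y => Real.log y - (5*y+1)*(y-1)/(2*y*(y+2)) with hf
  have key : AntitoneOn f (Set.Ioc (0:ℝ) 1) := by
    apply antitoneOn_of_deriv_nonpos (convex_Ioc 0 1)
    · intro x hx
      exact ((Cq_aux_hasDerivAt x hx.1).differentiableAt).continuousAt.continuousWithinAt
    · intro x hx
      rw [interior_Ioc] at hx
      exact ((Cq_aux_hasDerivAt x hx.1).differentiableAt).differentiableWithinAt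
    · intro x hx
      rw [interior_Ioc] at hx
      obtain ⟨hx0, hx1⟩ := hx
      rw [(Cq_aux_hasDerivAt x hx0).deriv]
      rw [sub_nonpos, inv_eq_one_div, div_le_div_iff₀ (by positivity) (by positivity)]
      have h1x : (0:ℝ) ≤ 1 - x := by linarith
      nlinarith [mul_nonneg hx0.le (mul_nonneg (mul_nonneg h1x h1x) h1x)]
  have h1 : f 1 = 0 := by
    simp [hf]
  have := key ht (by constructor <;> norm_num) ht.2
  rw [h1] at this
  have : 0 ≤ f t := this
  simpa [hf, sub_nonneg] using this

/-- For every `q ∈ (1,2]`, the constant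
`C_q = ((8+q(q-1))/4) (q-1)^{1/q-1}` satisfies `C_q < 3`. -/
theorem Cq_lt_three (q : ℝ) (hq : q ∈ Set.Ioc (1 : ℝ) 2) :
    (8 + q * (q - 1)) / 4 * (q - 1) ^ (1 / q - 1) < 3 := by
  obtain ⟨hq1, hq2⟩ := hq
  have ht0 : (0:ℝ) < q - 1 := by linarith
  have ht1 : q - 1 ≤ 1 := by linarith
  have hq0 : (0:ℝ) < q := by linarith
  have hlog := Cq_log_lower_bound (q-1) ⟨ht0, ht1⟩
  have hrpow : (q - 1) ^ (1 / q - 1) = Real.exp ((1/q - 1) * Real.log (q-1)) := by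
    rw [Real.rpow_def_of_pos ht0, mul_comm]
  set c : ℝ := (1/q - 1) * Real.log (q-1) with hc
  have hneg : 1/q - 1 ≤ 0 := by
    rw [sub_nonpos, div_le_one hq0]; linarith
  have hcle : c ≤ (1/q - 1) * ((5*(q-1)+1)*((q-1)-1)/(2*(q-1)*((q-1)+2))) :=
    mul_le_mul_of_nonpos_left hlog hneg
  have key : (8 + q * (q-1))/4 < 3 * (1 - c) := by
    have hstep : (8 + q * (q-1))/4
        < 3 * (1 - (1/q - 1) * ((5*(q-1)+1)*((q-1)-1)/(2*(q-1)*((q-1)+2)))) := by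
      rw [div_lt_iff₀ (by norm_num : (0:ℝ) < 4)]
      have hne1 : q ≠ 0 := ne_of_gt hq0
      have hne2 : (2*(q-1)*((q-1)+2)) ≠ 0 := by positivity
      field_simp
      ring_nf
      nlinarith [sq_nonneg (24*q - 31), mul_nonneg (mul_nonneg ht0.le ht0.le) (by linarith : (0:ℝ) ≤ 2 - q),
        mul_pos ht0 ht0, sq_nonneg (q-1), sq_nonneg (q-2),
        mul_nonneg (mul_nonneg (mul_nonneg ht0.le ht0.le) ht0.le) (by linarith : (0:ℝ) ≤ 2 - q)]
    calc (8 + q * (q-1))/4 < _ := hstep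
      _ ≤ 3 * (1 - c) := by nlinarith [hcle]
  have hApos : (0:ℝ) < (8 + q * (q-1))/4 := by positivity
  have h1c : (0:ℝ) < 1 - c := by nlinarith
  have hexp : Real.exp c ≤ (1 - c)⁻¹ := by
    have h2 : 1 - c ≤ Real.exp (-c) := by
      have := Real.add_one_le_exp (-c); linarith
    have h3 : (Real.exp (-c))⁻¹ ≤ (1-c)⁻¹ := by
      apply inv_anti₀ h1c h2
    rwa [← Real.exp_neg, neg_neg] at h3
  rw [hrpow]
  calc (8 + q * (q - 1)) / 4 * Real.exp c
      ≤ (8 + q * (q - 1)) / 4 * (1-c)⁻¹ :=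
        mul_le_mul_of_nonneg_left hexp hApos.le
    _ < 3 := by
        rw [← div_eq_mul_inv, div_lt_iff₀ h1c]; linarith
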